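/- Let $h, b \in M_n(\mathbb{C})$ with $h, b$ self-adjoint, let $u \in M_n(\mathbb{C})$ be a partial isometry with $[b, uu^*] = 0 = [b, u^*u]$, and let $z$ be a partial isometry with $zz^* = uu^*$ and $z^*z = u^*u$. Suppose $\|z^* b z - z^* z b - (u^* h u - u^* u h)\| < \varepsilon$. Then $|\mathrm{Tr}(h\, u u^* - h\, u^* u)| \leq \varepsilon\, \mathrm{Tr}(u^*u \vee uu^*) + 2\|b\|\, \mathrm{rank}(u^* u \vee u u^*)$. -/

import Mathlib

open scoped Matrix.Norms.L2Operator


private lemma trace_formula {n : ℕ} (p : Matrix (Fin n) (Fin n) ℂ)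
    (hps : star p = p) (hp : p * p = p) :
    p.trace = ∑ i, ∑ k, ((‖p k i‖ ^ 2 : ℝ) : ℂ) := by
  conv_lhs => rw [← hp]
  rw [Matrix.trace]
  apply Finset.sum_congr rfl
  intro i _
  rw [Matrix.diag_apply, Matrix.mul_apply]
  apply Finset.sum_congr rfl
  intro k _
  have hik : p i k = (starRingEnd ℂ) (p k i) := by
    conv_lhs => rw [← hps]
    rfl
  rw [hik, mul_comm, Complex.mul_conj, Complex.normSq_eq_norm_sq]

private lemma trace_re_formula {n : ℕ} (p : Matrix (Fin n) (Fin n) ℂ)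
    (hps : star p = p) (hp : p * p = p) :
    (p.trace).re = ∑ i, ∑ k, ‖p k i‖ ^ 2 := by
  rw [trace_formula p hps hp]
  rw [Complex.re_sum]
  apply Finset.sum_congr rfl
  intro i _
  rw [Complex.re_sum]
  apply Finset.sum_congr rfl
  intro k _
  exact Complex.ofReal_re _

private lemma trace_re_nonneg {n : ℕ} (p : Matrix (Fin n) (Fin n) ℂ)
    (hps : star p = p) (hp : p * p = p) :
    0 ≤ (p.trace).re := by
  rw [trace_re_formula p hps hp]
  positivity

private lemma trace_re_mono {n : ℕ} (p q : Matrix (Fin n) (Fin n) ℂ)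
    (hps : star p = p) (hp : p * p = p) (hqs : star q = q) (hq : q * q = q)
    (h1 : q * p = p) :
    (p.trace).re ≤ (q.trace).re := by
  have h2 : p * q = p := by
    have := congrArg star h1
    simpa [star_mul, hps, hqs] using this
  have hd : (q - p) * (q - p) = q - p := by
    rw [sub_mul, mul_sub, mul_sub, hq, hp, h1, h2]
    abel
  have hds : star (q - p) = q - p := by rw [star_sub, hps, hqs]
  have := trace_re_nonneg (q - p) hds hd
  rw [Matrix.trace_sub, Complex.sub_re] at this
  linarith



private lemma compress_bound {n : ℕ} (p A : Matrix (Fin n) (Fin n) ℂ)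
    (hps : star p = p) (hp : p * p = p) :
    ‖(p * A * p).trace‖ ≤ ‖A‖ * (p.trace).re := by
  classical
  have hpc : ∀ i k, p i k = (starRingEnd ℂ) (p k i) := by
    intro i k
    conv_lhs => rw [← hps]
    rfl
  have hbound : ∀ i, ‖(p * A * p) i i‖ ≤ ‖A‖ * ∑ k, ‖p k i‖ ^ 2 := by
    intro i
    let v : EuclideanSpace ℂ (Fin n) := (EuclideanSpace.equiv (Fin n) ℂ).symm (fun k => p k i)
    have lhs_eq : (p * A * p) i i =
        inner ℂ v ((EuclideanSpace.equiv (Fin n) ℂ).symm (A.mulVec v)) := by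
      have e1 : (p * A * p) i i = ∑ k, (starRingEnd ℂ) (p k i) * (∑ l, A k l * p l i) := by
        simp only [Matrix.mul_apply, Finset.sum_mul, Finset.mul_sum]
        rw [Finset.sum_comm]
        apply Finset.sum_congr rfl
        intro k _
        apply Finset.sum_congr rfl
        intro l _
        rw [hpc i k]
        ring
      have e2 : inner ℂ v ((EuclideanSpace.equiv (Fin n) ℂ).symm (A.mulVec v)) =
          ∑ k, (starRingEnd ℂ) (p k i) * (∑ l, A k l * p l i) := by
        simp [PiLp.inner_apply, RCLike.inner_apply, Matrix.mulVec, dotProduct, v,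
          EuclideanSpace.equiv, mul_comm]
      rw [e1, e2]
    have hnorm : ‖v‖ ^ 2 = ∑ k, ‖p k i‖ ^ 2 := by
      rw [EuclideanSpace.norm_eq, Real.sq_sqrt (by positivity)]
      rfl
    rw [lhs_eq]
    calc ‖inner (𝕜 := ℂ) v ((EuclideanSpace.equiv (Fin n) ℂ).symm (A.mulVec v))‖
        ≤ ‖v‖ * ‖(EuclideanSpace.equiv (Fin n) ℂ).symm (A.mulVec v)‖ := norm_inner_le_norm _ _
      _ ≤ ‖v‖ * (‖A‖ * ‖v‖) := by
          apply mul_le_mul_of_nonneg_left _ (norm_nonneg _)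
          exact A.l2_opNorm_mulVec v
      _ = ‖A‖ * ‖v‖ ^ 2 := by ring
      _ = ‖A‖ * ∑ k, ‖p k i‖ ^ 2 := by rw [hnorm]
  calc ‖(p * A * p).trace‖
      ≤ ∑ i, ‖(p * A * p) i i‖ := by
        rw [Matrix.trace]
        refine (norm_sum_le _ _).trans ?_
        apply le_of_eq
        apply Finset.sum_congr rfl
        intro i _
        rw [Matrix.diag_apply]
    _ ≤ ∑ i, ‖A‖ * ∑ k, ‖p k i‖ ^ 2 := Finset.sum_le_sum fun i _ => hbound i
    _ = ‖A‖ * ∑ i, ∑ k, ‖p k i‖ ^ 2 := by rw [Finset.mul_sum]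
    _ = ‖A‖ * (p.trace).re := by rw [trace_re_formula p hps hp]

private lemma trace_eq_rank {n : ℕ} (q : Matrix (Fin n) (Fin n) ℂ) (hq : q * q = q) :
    q.trace = (q.rank : ℂ) := by
  have hmv : q.mulVecLin ∘ₗ q.mulVecLin = q.mulVecLin := by
    rw [← Matrix.mulVecLin_mul, hq]
  have hproj : LinearMap.IsProj (LinearMap.range q.mulVecLin) q.mulVecLin := by
    constructor
    · intro x
      exact LinearMap.mem_range_self _ x
    · rintro x ⟨y, rfl⟩
      exact congrFun (congrArg (DFunLike.coe) hmv) y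
  have htr := hproj.trace
  rw [LinearMap.trace_eq_matrix_trace ℂ (Pi.basisFun ℂ (Fin n))] at htr
  rw [Matrix.rank, ← htr]
  congr 1
  have : LinearMap.toMatrix (Pi.basisFun ℂ (Fin n)) (Pi.basisFun ℂ (Fin n)) q.mulVecLin
      = LinearMap.toMatrix' q.mulVecLin := by
    rw [LinearMap.toMatrix_eq_toMatrix']
  rw [this]
  have : q.mulVecLin = Matrix.toLin' q := by
    ext x
    simp [Matrix.toLin'_apply, Matrix.mulVecLin_apply]
  rw [this, LinearMap.toMatrix'_toLin']



theorem stmt_11 (n : ℕ) (h b u z q : Matrix (Fin n) (Fin n) ℂ)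
    (hh : star h = h) (hb : star b = b)
    (hu : u * star u * u = u)
    (hbu : b * (u * star u) = (u * star u) * b)
    (hbu' : b * (star u * u) = (star u * u) * b)
    (hzz : z * star z * z = z)
    (hz : z * star z = u * star u) (hz' : star z * z = star u * u)
    (hqproj : q * q = q) (hqs : star q = q)
    (hq1 : q * (u * star u) = u * star u) (hq2 : q * (star u * u) = star u * u)
    (hqmin : ∀ r : Matrix (Fin n) (Fin n) ℂ, r * r = r → star r = r →
      r * (u * star u) = u * star u → r * (star u * u) = star u * u → q * r = q)
    (ε : ℝ)
    (hεb : ‖star z * b * z - star z * z * b - (star u * h * u - star u * u * h)‖ < ε) :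
    ‖(h * (u * star u) - h * (star u * u)).trace‖
      ≤ ε * (q.trace).re + 2 * ‖b‖ * (q.rank : ℝ) := by
  classical
  have hPs : star (u * star u) = u * star u := by rw [star_mul, star_star]
  have hP's : star (star u * u) = star u * u := by rw [star_mul, star_star]
  have hPidem : (u * star u) * (u * star u) = u * star u := by rw [← mul_assoc, hu]
  have hustar : star u * u * star u = star u := by
    have := congrArg star hu
    rw [star_mul, star_mul, star_star] at this
    rw [← mul_assoc] at this
    exact this
  have hzstar : star z * z * star z = star z := by
    have := congrArg star hzz
    rw [star_mul, star_mul, star_star] at this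
    rw [← mul_assoc] at this
    exact this
  have hP'idem : (star u * u) * (star u * u) = star u * u := by
    rw [mul_assoc, ← mul_assoc u (star u) u, hu]
  set D : Matrix (Fin n) (Fin n) ℂ :=
    star z * b * z - star z * z * b - (star u * h * u - star u * u * h) with hD
  -- q absorbs each term of D on the left
  have hA1 : q * (star z * b * z) = star z * b * z := by
    have h1 : (star u * u) * (star z * (b * z)) = star z * (b * z) := by
      rw [← hz', ← mul_assoc, hzstar]
    rw [mul_assoc (star z) b z]
    conv_lhs => rw [← h1]
    rw [← mul_assoc, hq2, h1]
  have hA2 : q * (star z * z * b) = star z * z * b := by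
    rw [hz', ← mul_assoc, hq2]
  have hA3 : q * (star u * h * u) = star u * h * u := by
    have h1 : (star u * u) * (star u * (h * u)) = star u * (h * u) := by
      rw [← mul_assoc, hustar]
    rw [mul_assoc (star u) h u]
    conv_lhs => rw [← h1]
    rw [← mul_assoc, hq2, h1]
  have hA4 : q * (star u * u * h) = star u * u * h := by
    rw [← mul_assoc, hq2]
  have hqD : q * D = D := by
    rw [hD, mul_sub, mul_sub, mul_sub, hA1, hA2, hA3, hA4]
  -- trace comparisons with q
  have hPq : ((u * star u).trace).re ≤ (q.trace).re :=
    trace_re_mono _ q hPs hPidem hqs hqproj hq1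
  have hP'q : ((star u * u).trace).re ≤ (q.trace).re :=
    trace_re_mono _ q hP's hP'idem hqs hqproj hq2
  have hqre : 0 ≤ (q.trace).re := trace_re_nonneg q hqs hqproj
  -- trace identity
  have htrD : D.trace = (b * (u * star u)).trace - (b * (star u * u)).trace -
      ((h * (u * star u)).trace - (h * (star u * u)).trace) := by
    rw [hD, Matrix.trace_sub, Matrix.trace_sub, Matrix.trace_sub]
    have e1 : (star z * b * z).trace = (b * (u * star u)).trace := by
      rw [Matrix.trace_mul_cycle, hz, Matrix.trace_mul_comm]
    have e2 : (star z * z * b).trace = (b * (star u * u)).trace := by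
      rw [hz', Matrix.trace_mul_comm]
    have e3 : (star u * h * u).trace = (h * (u * star u)).trace := by
      rw [Matrix.trace_mul_cycle, Matrix.trace_mul_comm]
    have e4 : (star u * u * h).trace = (h * (star u * u)).trace := by
      rw [Matrix.trace_mul_comm]
    rw [e1, e2, e3, e4]
  have hmain : (h * (u * star u) - h * (star u * u)).trace =
      (b * (u * star u)).trace - (b * (star u * u)).trace - D.trace := by
    rw [Matrix.trace_sub, htrD]
    ring
  -- bounds
  have hbP : ‖(b * (u * star u)).trace‖ ≤ ‖b‖ * (q.trace).re := by
    have heq : ((u * star u) * b * (u * star u)).trace = (b * (u * star u)).trace := by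
      rw [Matrix.trace_mul_cycle, hPidem, Matrix.trace_mul_comm]
    rw [← heq]
    exact (compress_bound _ b hPs hPidem).trans
      (mul_le_mul_of_nonneg_left hPq (norm_nonneg _))
  have hbP' : ‖(b * (star u * u)).trace‖ ≤ ‖b‖ * (q.trace).re := by
    have heq : ((star u * u) * b * (star u * u)).trace = (b * (star u * u)).trace := by
      rw [Matrix.trace_mul_cycle, hP'idem, Matrix.trace_mul_comm]
    rw [← heq]
    exact (compress_bound _ b hP's hP'idem).trans
      (mul_le_mul_of_nonneg_left hP'q (norm_nonneg _))
  have hDtr : ‖D.trace‖ ≤ ε * (q.trace).re := by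
    have heq : (q * D * q).trace = D.trace := by
      rw [Matrix.trace_mul_cycle, hqproj, hqD]
    rw [← heq]
    exact (compress_bound q D hqs hqproj).trans
      (mul_le_mul_of_nonneg_right hεb.le hqre)
  have hrank : ((q.rank : ℝ)) = (q.trace).re := by
    rw [trace_eq_rank q hqproj]
    simp
  have htri : ‖(h * (u * star u) - h * (star u * u)).trace‖ ≤
      ‖(b * (u * star u)).trace‖ + ‖(b * (star u * u)).trace‖
        + ‖D.trace‖ := by
    rw [hmain]
    calc ‖(b * (u * star u)).trace - (b * (star u * u)).trace - D.trace‖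
        ≤ ‖(b * (u * star u)).trace - (b * (star u * u)).trace‖ + ‖D.trace‖ :=
          norm_sub_le _ _
      _ ≤ (‖(b * (u * star u)).trace‖ + ‖(b * (star u * u)).trace‖) + ‖D.trace‖ := by
          have := norm_sub_le ((b * (u * star u)).trace) ((b * (star u * u)).trace)
          linarith
      _ = _ := by simp
  rw [hrank]
  calc ‖(h * (u * star u) - h * (star u * u)).trace‖
      ≤ ‖(b * (u * star u)).trace‖ + ‖(b * (star u * u)).trace‖
        + ‖D.trace‖ := htri
    _ ≤ ‖b‖ * (q.trace).re + ‖b‖ * (q.trace).re + ε * (q.trace).re := by linarith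
    _ = ε * (q.trace).re + 2 * ‖b‖ * (q.trace).re := by ring
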